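/- Let a group K act on a group H by automorphisms such that the induced action on H^{ab} is trivial. Then for every i ≥ 1, Γ_i(H ⋊ K) = Γ_i(H) ⋊ Γ_i(K), i.e. the i-th term of the lower central series of the semidirect product is generated by Γ_i(H) and Γ_i(K), and its intersection with H is Γ_i(H). -/

import Mathlib

open Subgroup
open scoped commutatorElement

namespace AlmostDirectAux

variable {G : Type*} [Group G]

private lemma comm_le_iff (A C N : Subgroup G) [N.Normal] :
    ⁅A, C⁆ ≤ N ↔ ⁅A.map (QuotientGroup.mk' N), C.map (QuotientGroup.mk' N)⁆ = ⊥ := by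
  rw [← Subgroup.map_commutator, Subgroup.map_eq_bot_iff, QuotientGroup.ker_mk']

private lemma commutator_sup_left_le (A B C N : Subgroup G) [N.Normal]
    (hA : ⁅A, C⁆ ≤ N) (hB : ⁅B, C⁆ ≤ N) : ⁅A ⊔ B, C⁆ ≤ N := by
  rw [comm_le_iff] at hA hB ⊢
  rw [Subgroup.map_sup]
  rw [Subgroup.commutator_eq_bot_iff_le_centralizer] at hA hB ⊢
  exact sup_le hA hB

private lemma three_subgroups_le (A B C N : Subgroup G) [N.Normal]
    (h1 : ⁅⁅B, C⁆, A⁆ ≤ N) (h2 : ⁅⁅C, A⁆, B⁆ ≤ N) : ⁅⁅A, B⁆, C⁆ ≤ N := by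
  rw [comm_le_iff] at h1 h2 ⊢
  rw [Subgroup.map_commutator] at h1 h2 ⊢
  exact Subgroup.commutator_commutator_eq_bot_of_rotate h1 h2

private lemma lcs_comm (m n : ℕ) :
    ⁅(⊤ : Subgroup G).lowerCentralSeries m, (⊤ : Subgroup G).lowerCentralSeries n⁆ ≤ (⊤ : Subgroup G).lowerCentralSeries (m + n + 1) := by
  induction m generalizing n with
  | zero =>
    have h : ⁅(⊤ : Subgroup G).lowerCentralSeries n, (⊤ : Subgroup G)⁆ = (⊤ : Subgroup G).lowerCentralSeries (n + 1) := rfl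
    refine le_of_eq ?_
    calc ⁅(⊤ : Subgroup G).lowerCentralSeries 0, (⊤ : Subgroup G).lowerCentralSeries n⁆
        = ⁅(⊤ : Subgroup G).lowerCentralSeries n, (⊤ : Subgroup G)⁆ := by
          rw [Subgroup.commutator_comm, Subgroup.lowerCentralSeries_zero]
      _ = (⊤ : Subgroup G).lowerCentralSeries (0 + n + 1) := by rw [h]; congr 1; omega
  | succ m ih =>
    have e : (⊤ : Subgroup G).lowerCentralSeries (m + 1) = ⁅(⊤ : Subgroup G).lowerCentralSeries m, (⊤ : Subgroup G)⁆ := rfl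
    rw [e]
    refine three_subgroups_le _ _ _ _ ?_ ?_
    · have h1 : ⁅(⊤ : Subgroup G), (⊤ : Subgroup G).lowerCentralSeries n⁆ ≤ (⊤ : Subgroup G).lowerCentralSeries (n + 1) := by
        rw [Subgroup.commutator_comm]
        exact le_of_eq rfl
      calc ⁅⁅(⊤ : Subgroup G), (⊤ : Subgroup G).lowerCentralSeries n⁆, (⊤ : Subgroup G).lowerCentralSeries m⁆
          ≤ ⁅(⊤ : Subgroup G).lowerCentralSeries (n + 1), (⊤ : Subgroup G).lowerCentralSeries m⁆ :=
            Subgroup.commutator_mono h1 le_rfl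
        _ = ⁅(⊤ : Subgroup G).lowerCentralSeries m, (⊤ : Subgroup G).lowerCentralSeries (n + 1)⁆ := Subgroup.commutator_comm _ _
        _ ≤ (⊤ : Subgroup G).lowerCentralSeries (m + (n + 1) + 1) := ih (n + 1)
        _ = (⊤ : Subgroup G).lowerCentralSeries (m + 1 + n + 1) := by congr 1; omega
    · have h2 : ⁅(⊤ : Subgroup G).lowerCentralSeries n, (⊤ : Subgroup G).lowerCentralSeries m⁆ ≤
          (⊤ : Subgroup G).lowerCentralSeries (m + n + 1) := by
        rw [Subgroup.commutator_comm]; exact ih n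
      calc ⁅⁅(⊤ : Subgroup G).lowerCentralSeries n, (⊤ : Subgroup G).lowerCentralSeries m⁆, (⊤ : Subgroup G)⁆
          ≤ ⁅(⊤ : Subgroup G).lowerCentralSeries (m + n + 1), (⊤ : Subgroup G)⁆ :=
            Subgroup.commutator_mono h2 le_rfl
        _ = (⊤ : Subgroup G).lowerCentralSeries (m + n + 1 + 1) := rfl
        _ = (⊤ : Subgroup G).lowerCentralSeries (m + 1 + n + 1) := by congr 1; omega

private lemma comm_mul_left (a b t : G) : ⁅a * b, t⁆ = a * ⁅b, t⁆ * a⁻¹ * ⁅a, t⁆ := by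
  simp only [commutatorElement_def]; group

private lemma comm_mul_right (g t₁ t₂ : G) : ⁅g, t₁ * t₂⁆ = ⁅g, t₁⁆ * (t₁ * ⁅g, t₂⁆ * t₁⁻¹) := by
  simp only [commutatorElement_def]; group

end AlmostDirectAux

namespace AlmostDirectSD

open SemidirectProduct AlmostDirectAux

variable {H K : Type*} [Group H] [Group K] (φ : K →* MulAut H)

private def A (j : ℕ) : Subgroup (H ⋊[φ] K) :=
  ((⊤ : Subgroup H).lowerCentralSeries j).map (inl : H →* H ⋊[φ] K)

private def B (j : ℕ) : Subgroup (H ⋊[φ] K) :=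
  ((⊤ : Subgroup K).lowerCentralSeries j).map (inr : K →* H ⋊[φ] K)

private lemma cAA (m n : ℕ) : ⁅A φ m, A φ n⁆ ≤ A φ (m + n + 1) := by
  rw [A, A, A, ← Subgroup.map_commutator]
  exact Subgroup.map_mono (lcs_comm m n)

private lemma succA (j : ℕ) : A φ (j + 1) = ⁅A φ j, A φ 0⁆ := by
  have e : (⊤ : Subgroup H).lowerCentralSeries (j + 1) = ⁅(⊤ : Subgroup H).lowerCentralSeries j, (⊤ : Subgroup H)⁆ := rfl
  rw [A, e, Subgroup.map_commutator]
  rfl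

private lemma top_eq : (⊤ : Subgroup (H ⋊[φ] K)) = A φ 0 ⊔ B φ 0 := by
  refine le_antisymm ?_ le_top
  intro g _
  rw [← inl_left_mul_inr_right g]
  exact mul_mem (Subgroup.mem_sup_left ⟨g.left, trivial, rfl⟩)
    (Subgroup.mem_sup_right ⟨g.right, trivial, rfl⟩)

private lemma A_char (j : ℕ) (k : K) {x : H} (hx : x ∈ (⊤ : Subgroup H).lowerCentralSeries j) :
    φ k x ∈ (⊤ : Subgroup H).lowerCentralSeries j :=
  Subgroup.lowerCentralSeries.map ((φ k : H ≃* H) : H →* H) j ⟨x, hx, rfl⟩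

private lemma A_normal (j : ℕ) : (A φ j).Normal := by
  constructor
  rintro _ ⟨x, hx, rfl⟩ g
  have he : g * inl x * g⁻¹ = (inl (g.left * φ g.right x * g.left⁻¹) : H ⋊[φ] K) := by
    ext <;> simp [mul_assoc]
  rw [he]
  exact ⟨g.left * φ g.right x * g.left⁻¹,
    (Subgroup.lowerCentralSeries_normal _ j).conj_mem _ (A_char φ j g.right hx) g.left, rfl⟩

private lemma comm_inr_inl (y : K) (h : H) :
    ⁅(inr : K →* H ⋊[φ] K) y, (inl : H →* H ⋊[φ] K) h⁆ = inl (φ y h * h⁻¹) := by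
  rw [commutatorElement_def]
  ext <;> simp

private lemma comm_inl_inl (x h : H) :
    ⁅(inl : H →* H ⋊[φ] K) x, (inl : H →* H ⋊[φ] K) h⁆ = inl ⁅x, h⁆ := (map_commutatorElement _ _ _).symm

private lemma comm_inr_inr (y k : K) :
    ⁅(inr : K →* H ⋊[φ] K) y, (inr : K →* H ⋊[φ] K) k⁆ = inr ⁅y, k⁆ := (map_commutatorElement _ _ _).symm

private lemma A_le (i : ℕ) : A φ i ≤ (⊤ : Subgroup (H ⋊[φ] K)).lowerCentralSeries i :=
  Subgroup.lowerCentralSeries.map inl i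

private lemma B_le (i : ℕ) : B φ i ≤ (⊤ : Subgroup (H ⋊[φ] K)).lowerCentralSeries i :=
  Subgroup.lowerCentralSeries.map inr i

variable (hab : ∀ (k : K) (h : H), φ k h * h⁻¹ ∈ commutator H)

include hab

private lemma key1 : ∀ j, ⁅B φ 0, A φ j⁆ ≤ A φ (j + 1) := by
  have base : ⁅B φ 0, A φ 0⁆ ≤ A φ 1 := by
    rw [Subgroup.commutator_le]
    rintro _ ⟨y, -, rfl⟩ _ ⟨x, -, rfl⟩
    rw [comm_inr_inl]
    exact ⟨φ y x * x⁻¹, by rw [Subgroup.top_lowerCentralSeries_one]; exact hab y x, rfl⟩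
  intro j
  induction j with
  | zero => exact base
  | succ j ih =>
    haveI := A_normal φ (j + 2)
    rw [succA φ j, Subgroup.commutator_comm]
    refine three_subgroups_le _ _ _ _ ?_ ?_
    · calc ⁅⁅A φ 0, B φ 0⁆, A φ j⁆ ≤ ⁅A φ 1, A φ j⁆ := by
            refine Subgroup.commutator_mono ?_ le_rfl
            rw [Subgroup.commutator_comm]; exact base
        _ ≤ A φ (1 + j + 1) := cAA φ 1 j
        _ = A φ (j + 2) := by congr 1; omega
    · calc ⁅⁅B φ 0, A φ j⁆, A φ 0⁆ ≤ ⁅A φ (j + 1), A φ 0⁆ :=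
            Subgroup.commutator_mono ih le_rfl
        _ ≤ A φ (j + 1 + 0 + 1) := cAA φ (j + 1) 0
        _ = A φ (j + 2) := rfl

private lemma key0 (j : ℕ) : ⁅(⊤ : Subgroup (H ⋊[φ] K)), A φ j⁆ ≤ A φ (j + 1) := by
  haveI := A_normal φ (j + 1)
  rw [top_eq φ]
  refine commutator_sup_left_le _ _ _ _ ?_ (key1 φ hab j)
  calc ⁅A φ 0, A φ j⁆ ≤ A φ (0 + j + 1) := cAA φ 0 j
    _ = A φ (j + 1) := by congr 1; omega

private lemma key2 : ∀ i j, ⁅(⊤ : Subgroup (H ⋊[φ] K)).lowerCentralSeries i, A φ j⁆ ≤ A φ (i + j + 1) := by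
  intro i
  induction i with
  | zero =>
    intro j
    rw [Subgroup.lowerCentralSeries_zero]
    calc ⁅(⊤ : Subgroup (H ⋊[φ] K)), A φ j⁆ ≤ A φ (j + 1) := key0 φ hab j
      _ = A φ (0 + j + 1) := by congr 1; omega
  | succ i ih =>
    intro j
    haveI := A_normal φ (i + 1 + j + 1)
    have e : (⊤ : Subgroup (H ⋊[φ] K)).lowerCentralSeries (i + 1) =
        ⁅(⊤ : Subgroup (H ⋊[φ] K)).lowerCentralSeries i, (⊤ : Subgroup (H ⋊[φ] K))⁆ := rfl
    rw [e]
    refine three_subgroups_le _ _ _ _ ?_ ?_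
    · calc ⁅⁅(⊤ : Subgroup (H ⋊[φ] K)), A φ j⁆, (⊤ : Subgroup (H ⋊[φ] K)).lowerCentralSeries i⁆
          ≤ ⁅A φ (j + 1), (⊤ : Subgroup (H ⋊[φ] K)).lowerCentralSeries i⁆ :=
            Subgroup.commutator_mono (key0 φ hab j) le_rfl
        _ = ⁅(⊤ : Subgroup (H ⋊[φ] K)).lowerCentralSeries i, A φ (j + 1)⁆ := Subgroup.commutator_comm _ _
        _ ≤ A φ (i + (j + 1) + 1) := ih (j + 1)
        _ = A φ (i + 1 + j + 1) := by congr 1; omega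
    · have h2 : ⁅A φ j, (⊤ : Subgroup (H ⋊[φ] K)).lowerCentralSeries i⁆ ≤ A φ (i + j + 1) := by
        rw [Subgroup.commutator_comm]; exact ih j
      calc ⁅⁅A φ j, (⊤ : Subgroup (H ⋊[φ] K)).lowerCentralSeries i⁆, (⊤ : Subgroup (H ⋊[φ] K))⁆
          = ⁅(⊤ : Subgroup (H ⋊[φ] K)), ⁅A φ j, (⊤ : Subgroup (H ⋊[φ] K)).lowerCentralSeries i⁆⁆ :=
            Subgroup.commutator_comm _ _
        _ ≤ ⁅(⊤ : Subgroup (H ⋊[φ] K)), A φ (i + j + 1)⁆ :=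
            Subgroup.commutator_mono le_rfl h2
        _ ≤ A φ (i + j + 1 + 1) := key0 φ hab (i + j + 1)
        _ = A φ (i + 1 + j + 1) := by congr 1; omega

private lemma keyBA {i : ℕ} {y : K} (hy : y ∈ (⊤ : Subgroup K).lowerCentralSeries i) (h : H) :
    ⁅(inr y : H ⋊[φ] K), inl h⁆ ∈ A φ (i + 1) := by
  have hm : ⁅(inr y : H ⋊[φ] K), inl h⁆ ∈ ⁅(⊤ : Subgroup (H ⋊[φ] K)).lowerCentralSeries i, A φ 0⁆ :=
    Subgroup.commutator_mem_commutator (B_le φ i ⟨y, hy, rfl⟩) ⟨h, trivial, rfl⟩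
  have := key2 φ hab i 0 hm
  simpa using this

private lemma key_elt {i : ℕ} {y : K} (hy : y ∈ (⊤ : Subgroup K).lowerCentralSeries i) (h : H) :
    φ y h * h⁻¹ ∈ (⊤ : Subgroup H).lowerCentralSeries (i + 1) := by
  have := keyBA φ hab hy h
  rw [comm_inr_inl] at this
  obtain ⟨z, hz, he⟩ := this
  rwa [← inl_injective he]

private lemma N_normal (i : ℕ) : (A φ i ⊔ B φ i).Normal := by
  haveI := A_normal φ i
  constructor
  intro n hn g
  rw [← SetLike.mem_coe, Subgroup.normal_mul] at hn
  obtain ⟨a, ⟨x, hx, rfl⟩, b, ⟨y, hy, rfl⟩, rfl⟩ := hn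
  set h := g.left with hh
  set k := g.right with hk
  have hy' : k * y * k⁻¹ ∈ (⊤ : Subgroup K).lowerCentralSeries i :=
    (Subgroup.lowerCentralSeries_normal _ i).conj_mem y hy k
  have hx1 : h * φ k x * h⁻¹ ∈ (⊤ : Subgroup H).lowerCentralSeries i :=
    (Subgroup.lowerCentralSeries_normal _ i).conj_mem _ (A_char φ i k hx) h
  have hx2 : h * φ (k * y * k⁻¹) h⁻¹ ∈ (⊤ : Subgroup H).lowerCentralSeries i := by
    have : φ (k * y * k⁻¹) h * h⁻¹ ∈ (⊤ : Subgroup H).lowerCentralSeries (i + 1) := key_elt φ hab hy' h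
    have h2 : (φ (k * y * k⁻¹) h * h⁻¹)⁻¹ ∈ (⊤ : Subgroup H).lowerCentralSeries (i + 1) :=
      inv_mem this
    have h3 : h * φ (k * y * k⁻¹) h⁻¹ = (φ (k * y * k⁻¹) h * h⁻¹)⁻¹ := by
      rw [map_inv]; group
    rw [h3]
    exact Subgroup.lowerCentralSeries_antitone (S := ⊤) (Nat.le_succ i) h2
  have he : g * (inl x * inr y) * g⁻¹ =
      inl (h * φ k x * φ (k * y * k⁻¹) h⁻¹) * inr (k * y * k⁻¹) := by
    ext <;> simp [hh, hk, mul_assoc]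
  rw [he]
  refine mul_mem (Subgroup.mem_sup_left ⟨_, ?_, rfl⟩) (Subgroup.mem_sup_right ⟨_, hy', rfl⟩)
  have : h * φ k x * φ (k * y * k⁻¹) h⁻¹ =
      (h * φ k x * h⁻¹) * (h * φ (k * y * k⁻¹) h⁻¹) := by group
  rw [this]
  exact mul_mem hx1 hx2

private lemma main_sup : ∀ i, (⊤ : Subgroup (H ⋊[φ] K)).lowerCentralSeries i = A φ i ⊔ B φ i := by
  intro i
  induction i with
  | zero => rw [Subgroup.lowerCentralSeries_zero]; exact top_eq φ
  | succ i ih =>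
    refine le_antisymm ?_ (sup_le (A_le φ (i + 1)) (B_le φ (i + 1)))
    haveI := A_normal φ i
    haveI hN := N_normal φ hab (i + 1)
    have e : (⊤ : Subgroup (H ⋊[φ] K)).lowerCentralSeries (i + 1) =
        ⁅(⊤ : Subgroup (H ⋊[φ] K)).lowerCentralSeries i, (⊤ : Subgroup (H ⋊[φ] K))⁆ := rfl
    rw [e, Subgroup.commutator_le]
    intro g hg t _
    rw [ih, ← SetLike.mem_coe, Subgroup.normal_mul] at hg
    obtain ⟨a, ⟨x, hx, rfl⟩, b, ⟨y, hy, rfl⟩, rfl⟩ := hg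
    set c := (inl t.left : H ⋊[φ] K) with hc
    set d := (inr t.right : H ⋊[φ] K) with hd
    have ht : t = c * d := (inl_left_mul_inr_right t).symm
    have hbc : ⁅(inr y : H ⋊[φ] K), c⁆ ∈ A φ (i + 1) := keyBA φ hab hy t.left
    have hbd : ⁅(inr y : H ⋊[φ] K), d⁆ ∈ B φ (i + 1) := by
      rw [hd, comm_inr_inr]
      exact ⟨⁅y, t.right⁆, Subgroup.commutator_mem_commutator hy trivial, rfl⟩
    have hac : ⁅(inl x : H ⋊[φ] K), c⁆ ∈ A φ (i + 1) := by
      rw [hc, comm_inl_inl]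
      exact ⟨⁅x, t.left⁆, Subgroup.commutator_mem_commutator hx trivial, rfl⟩
    have had : ⁅(inl x : H ⋊[φ] K), d⁆ ∈ A φ (i + 1) := by
      have : ⁅(inr t.right : H ⋊[φ] K), inl x⁆ ∈ A φ (i + 1) := by
        have hm : ⁅(inr t.right : H ⋊[φ] K), inl x⁆ ∈ ⁅B φ 0, A φ i⁆ :=
          Subgroup.commutator_mem_commutator ⟨t.right, trivial, rfl⟩ ⟨x, hx, rfl⟩
        exact key1 φ hab i hm
      rw [hd, ← commutatorElement_inv]
      exact inv_mem this
    -- assemble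
    have memN : ∀ {u : H ⋊[φ] K}, u ∈ A φ (i + 1) → u ∈ A φ (i + 1) ⊔ B φ (i + 1) :=
      fun hu => Subgroup.mem_sup_left hu
    have memN' : ∀ {u : H ⋊[φ] K}, u ∈ B φ (i + 1) → u ∈ A φ (i + 1) ⊔ B φ (i + 1) :=
      fun hu => Subgroup.mem_sup_right hu
    have hyt : ⁅(inr y : H ⋊[φ] K), t⁆ ∈ A φ (i + 1) ⊔ B φ (i + 1) := by
      rw [ht, comm_mul_right]
      exact mul_mem (memN hbc) (hN.conj_mem _ (memN' hbd) c)
    have hxt : ⁅(inl x : H ⋊[φ] K), t⁆ ∈ A φ (i + 1) ⊔ B φ (i + 1) := by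
      rw [ht, comm_mul_right]
      exact mul_mem (memN hac) (hN.conj_mem _ (memN had) c)
    rw [comm_mul_left]
    exact mul_mem (hN.conj_mem _ hyt (inl x)) hxt

end AlmostDirectSD

/-- For an almost-direct product (the action of `K` on `H^{ab}` is trivial),
`Γ_i(H ⋊ K) = Γ_i(H) ⋊ Γ_i(K)`: it is generated by `Γ_i(H)` and `Γ_i(K)`, and its
intersection with `H` is `Γ_i(H)` (0-based indexing). -/
theorem lowerCentralSeries_almost_direct_product {H K : Type*} [Group H] [Group K]
    (φ : K →* MulAut H)
    (hab : ∀ (k : K) (h : H), φ k h * h⁻¹ ∈ commutator H) (i : ℕ) :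
    (⊤ : Subgroup (H ⋊[φ] K)).lowerCentralSeries i =
        ((⊤ : Subgroup H).lowerCentralSeries i).map (SemidirectProduct.inl : H →* H ⋊[φ] K) ⊔
          ((⊤ : Subgroup K).lowerCentralSeries i).map (SemidirectProduct.inr : K →* H ⋊[φ] K) ∧
      ((⊤ : Subgroup (H ⋊[φ] K)).lowerCentralSeries i).comap (SemidirectProduct.inl : H →* H ⋊[φ] K) =
        (⊤ : Subgroup H).lowerCentralSeries i := by
  have hsup := AlmostDirectSD.main_sup φ hab i
  refine ⟨hsup, ?_⟩
  ext z
  simp only [Subgroup.mem_comap]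
  constructor
  · intro hz
    rw [hsup] at hz
    haveI := AlmostDirectSD.A_normal φ i
    rw [← SetLike.mem_coe, Subgroup.normal_mul] at hz
    obtain ⟨a, ⟨x, hx, rfl⟩, b, ⟨y, hy, rfl⟩, he⟩ := hz
    have hr := congrArg SemidirectProduct.right he
    simp at hr
    subst hr
    simp at he
    rw [← he]; exact hx
  · intro hz
    rw [hsup]
    exact Subgroup.mem_sup_left ⟨z, hz, rfl⟩
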